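/- Let A be an additive category and B a full additive subcategory. In the additive quotient category A/B (same objects as A, morphisms quotiented by those factoring through an object of B), an object x is a retract of an object y if and only if, in A, x is a retract of y ⊕ z for some object z in B. -/
import Mathlib


open CategoryTheory CategoryTheory.Limits

namespace Stmt0

variable {A : Type*} [Category A] [Preadditive A] [HasBinaryBiproducts A]

/-- A morphism factors through an object belonging to the class `B`. -/
def FactorsThru (B : Set A) {x y : A} (f : x ⟶ y) : Prop :=
  ∃ (b : A) (g : x ⟶ b) (h : b ⟶ y), b ∈ B ∧ g ≫ h = f

/-- In the additive quotient `A/B`, `x` is a retract of `y` (i.e. there are `α : x ⟶ y`,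
`β : y ⟶ x` whose classes compose to the identity, which means `𝟙 x - α ≫ β` factors
through an object of `B`) if and only if, in `A`, `x` is a retract of `y ⊞ z` for
some `z ∈ B`. -/
theorem retract_in_additive_quotient (B : Set A)
    (hB : ∀ b b', b ∈ B → b' ∈ B → (b ⊞ b' : A) ∈ B)
    (x y : A) :
    (∃ (α : x ⟶ y) (β : y ⟶ x), FactorsThru B (𝟙 x - α ≫ β)) ↔
      (∃ z, z ∈ B ∧ ∃ (α : x ⟶ y ⊞ z) (β : y ⊞ z ⟶ x), α ≫ β = 𝟙 x) := by
  constructor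
  · rintro ⟨α, β, b, g, h, hb, hgh⟩
    refine ⟨b, hb, biprod.lift α g, biprod.desc β h, ?_⟩
    simp only [biprod.lift_desc]; rw [hgh]; abel
  · rintro ⟨z, hz, α, β, hαβ⟩
    refine ⟨α ≫ biprod.fst, biprod.inl ≫ β, z, α ≫ biprod.snd, biprod.inr ≫ β, hz, ?_⟩
    have := biprod.total (X := y) (Y := z)
    calc (α ≫ biprod.snd) ≫ biprod.inr ≫ β
        = α ≫ (biprod.snd ≫ biprod.inr + biprod.fst ≫ biprod.inl) ≫ β
          - (α ≫ biprod.fst) ≫ biprod.inl ≫ β := by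
          simp [Preadditive.add_comp, Preadditive.comp_add, Preadditive.comp_sub]
      _ = 𝟙 x - (α ≫ biprod.fst) ≫ biprod.inl ≫ β := by
          rw [add_comm, this]; simp [hαβ]

end Stmt0
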